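/- Let lines a₁, …, a_n (n ≥ 3) be given with equations y = mᵢx + cᵢ and m₁ < m₂ < ⋯ < m_n. Then the region above all the lines, {(x,y) : y > mᵢx + cᵢ for all i}, has every line contributing a segment of positive length to its boundary if and only if for every 1 < i < n the line aᵢ lies strictly above the intersection point of a_{i-1} and a_{i+1}. -/

import Mathlib

open Set

/-- A non-vertical line in the plane represented by (slope, intercept). -/
def lineSet (l : ℝ × ℝ) : Set (ℝ × ℝ) := {p | p.2 = l.1 * p.1 + l.2}

/-- General position: pairwise distinct slopes (hence no two parallel, none vertical
by the representation) and no three concurrent. -/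
def GenPos (F : Finset (ℝ × ℝ)) : Prop :=
  (∀ l₁ ∈ F, ∀ l₂ ∈ F, l₁ ≠ l₂ → l₁.1 ≠ l₂.1) ∧
  (∀ l₁ ∈ F, ∀ l₂ ∈ F, ∀ l₃ ∈ F, l₁ ≠ l₂ → l₁ ≠ l₃ → l₂ ≠ l₃ →
    ¬ ∃ p, p ∈ lineSet l₁ ∧ p ∈ lineSet l₂ ∧ p ∈ lineSet l₃)

/-- Intersection point of two non-parallel lines. -/
noncomputable def interPt (l₁ l₂ : ℝ × ℝ) : ℝ × ℝ :=
  ((l₂.2 - l₁.2) / (l₁.1 - l₂.1),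
   l₁.1 * ((l₂.2 - l₁.2) / (l₁.1 - l₂.1)) + l₁.2)

/-- The point `p` lies strictly below the line `l` (the line is strictly above `p`). -/
def Below (p : ℝ × ℝ) (l : ℝ × ℝ) : Prop := p.2 < l.1 * p.1 + l.2

/-- The point `p` lies strictly above the line `l` (the line is strictly below `p`). -/
def Above (p : ℝ × ℝ) (l : ℝ × ℝ) : Prop := p.2 > l.1 * p.1 + l.2

/-- A sequence of lines ordered by strictly increasing slope forms a cup: each
intermediate line lies strictly above the intersection of its two neighbours. -/
def IsCup {k : ℕ} (a : Fin k → ℝ × ℝ) : Prop :=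
  StrictMono (fun i => (a i).1) ∧
  ∀ i : Fin k, ∀ _h1 : 0 < (i : ℕ), ∀ h2 : (i : ℕ) + 1 < k,
    Below (interPt (a ⟨(i : ℕ) - 1, by omega⟩) (a ⟨(i : ℕ) + 1, h2⟩)) (a i)

/-- A sequence of lines ordered by strictly increasing slope forms a cap: each
intermediate line lies strictly below the intersection of its two neighbours. -/
def IsCap {k : ℕ} (a : Fin k → ℝ × ℝ) : Prop :=
  StrictMono (fun i => (a i).1) ∧
  ∀ i : Fin k, ∀ _h1 : 0 < (i : ℕ), ∀ h2 : (i : ℕ) + 1 < k,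
    Above (interPt (a ⟨(i : ℕ) - 1, by omega⟩) (a ⟨(i : ℕ) + 1, h2⟩)) (a i)

/-- `F` contains `k` lines forming a `k`-cup. -/
def HasCup (k : ℕ) (F : Finset (ℝ × ℝ)) : Prop :=
  ∃ a : Fin k → ℝ × ℝ, (∀ i, a i ∈ F) ∧ IsCup a

/-- `F` contains `l` lines forming an `l`-cap. -/
def HasCap (l : ℕ) (F : Finset (ℝ × ℝ)) : Prop :=
  ∃ a : Fin l → ℝ × ℝ, (∀ i, a i ∈ F) ∧ IsCap a

/-- Union of the lines of a family. -/
def linesUnion (F : Finset (ℝ × ℝ)) : Set (ℝ × ℝ) := ⋃ l ∈ F, lineSet l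

/-- `P` is a cell of the arrangement of `F`: a connected component of the
complement of the union of the lines. -/
def IsCellOf (F : Finset (ℝ × ℝ)) (P : Set (ℝ × ℝ)) : Prop :=
  ∃ p ∈ (linesUnion F)ᶜ, P = connectedComponentIn (linesUnion F)ᶜ p

/-- The line `l` contributes a (positive length) segment to the boundary of `P`:
the closure of `P` meets `l` in more than one point. -/
def Contributes (l : ℝ × ℝ) (P : Set (ℝ × ℝ)) : Prop :=
  ∃ p q : ℝ × ℝ, p ≠ q ∧ p ∈ closure P ∩ lineSet l ∧ q ∈ closure P ∩ lineSet l

/-- `P` is a cell of the arrangement of `F` with a boundary segment on every line of `F`. -/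
def IsNCell (F : Finset (ℝ × ℝ)) (P : Set (ℝ × ℝ)) : Prop :=
  IsCellOf F P ∧ ∀ l ∈ F, Contributes l P

/-- The lines of `F` are in convex position: they define a cell bounded by all of them. -/
def ConvexPos (F : Finset (ℝ × ℝ)) : Prop := ∃ P, IsNCell F P
lemma xcross_le_iff {l₁ l₂ : ℝ × ℝ} (h : l₁.1 < l₂.1) (x : ℝ) :
    l₁.1 * x + l₁.2 ≤ l₂.1 * x + l₂.2 ↔ (l₂.2 - l₁.2) / (l₁.1 - l₂.1) ≤ x := by
  rw [div_le_iff_of_neg (by linarith)]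
  constructor <;> intro h' <;> nlinarith

lemma xcross_lt_iff {l₁ l₂ : ℝ × ℝ} (h : l₁.1 < l₂.1) (x : ℝ) :
    l₁.1 * x + l₁.2 < l₂.1 * x + l₂.2 ↔ (l₂.2 - l₁.2) / (l₁.1 - l₂.1) < x := by
  rw [div_lt_iff_of_neg (by linarith)]
  constructor <;> intro h' <;> nlinarith

lemma below_interPt_iff {l₁ l₂ l₃ : ℝ × ℝ} (h12 : l₁.1 < l₂.1) (h23 : l₂.1 < l₃.1) :
    Below (interPt l₁ l₃) l₂ ↔
      (l₂.2 - l₁.2) / (l₁.1 - l₂.1) < (l₃.2 - l₂.2) / (l₂.1 - l₃.1) := by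
  have h13 : l₁.1 < l₃.1 := h12.trans h23
  unfold Below interPt
  set x := (l₃.2 - l₁.2) / (l₁.1 - l₃.1) with hx
  have hd : l₁.1 - l₃.1 ≠ 0 := by linarith
  have hval : l₃.1 * x + l₃.2 = l₁.1 * x + l₁.2 := by
    rw [hx]; field_simp; ring
  show l₁.1 * x + l₁.2 < l₂.1 * x + l₂.2 ↔ _
  constructor
  · intro h
    have h1 : (l₂.2 - l₁.2) / (l₁.1 - l₂.1) < x := (xcross_lt_iff h12 x).mp h
    have h2 : x < (l₃.2 - l₂.2) / (l₂.1 - l₃.1) := by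
      by_contra hcon
      push_neg at hcon
      have := (xcross_le_iff h23 x).mpr hcon
      linarith
    linarith
  · intro h
    rw [xcross_lt_iff h12]
    by_contra hcon
    push_neg at hcon
    have hL : l₂.1 * x + l₂.2 ≤ l₁.1 * x + l₁.2 := by
      by_contra h'
      push_neg at h'
      exact absurd ((xcross_lt_iff h12 x).mp h') (by linarith)
    have hx23 : x < (l₃.2 - l₂.2) / (l₂.1 - l₃.1) := lt_of_le_of_lt hcon h
    have hL3 : l₃.1 * x + l₃.2 < l₂.1 * x + l₂.2 := by
      by_contra h'
      push_neg at h'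
      exact absurd ((xcross_le_iff h23 x).mp h') (by linarith)
    linarith

/-- The region above all
iff every intermediate line lies strictly above the intersection of its neighbours. -/
theorem stmt6 (n : ℕ) (hn : 3 ≤ n) (a : Fin n → ℝ × ℝ)
    (hmono : StrictMono fun i => (a i).1)
    (hgp : ∀ i j k : Fin n, i < j → j < k →
      ∀ p, ¬(p ∈ lineSet (a i) ∧ p ∈ lineSet (a j) ∧ p ∈ lineSet (a k))) :
    (∀ i : Fin n,
        Contributes (a i) {p : ℝ × ℝ | ∀ j : Fin n, (a j).1 * p.1 + (a j).2 < p.2}) ↔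
      (∀ i : Fin n, ∀ _h1 : 0 < (i : ℕ), ∀ h2 : (i : ℕ) + 1 < n,
        Below (interPt (a ⟨(i : ℕ) - 1, by omega⟩) (a ⟨(i : ℕ) + 1, h2⟩)) (a i)) := by
  set U : Set (ℝ × ℝ) := {p : ℝ × ℝ | ∀ j : Fin n, (a j).1 * p.1 + (a j).2 < p.2} with hUdef
  -- closure of U is contained in each closed halfplane
  have hsub : ∀ j : Fin n, closure U ⊆ {p : ℝ × ℝ | (a j).1 * p.1 + (a j).2 ≤ p.2} := by
    intro j
    apply closure_minimal
    · intro p hp; exact le_of_lt (hp j)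
    · exact isClosed_le (by fun_prop) continuous_snd
  -- points where a line is maximal are in the closure of U
  have hclos : ∀ (i : Fin n) (x : ℝ),
      (∀ j : Fin n, (a j).1 * x + (a j).2 ≤ (a i).1 * x + (a i).2) →
      (x, (a i).1 * x + (a i).2) ∈ closure U := by
    intro i x hx
    have h1 : Filter.Tendsto (fun k : ℕ => (a i).1 * x + (a i).2 + 1 / ((k : ℝ) + 1))
        Filter.atTop (nhds ((a i).1 * x + (a i).2)) := by
      have h0 : Filter.Tendsto (fun k : ℕ => 1 / ((k : ℝ) + 1)) Filter.atTop (nhds 0) :=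
        tendsto_one_div_add_atTop_nhds_zero_nat
      have := Filter.Tendsto.add
        (tendsto_const_nhds (x := (a i).1 * x + (a i).2) (f := (Filter.atTop : Filter ℕ))) h0
      simpa using this
    have htend : Filter.Tendsto
        (fun k : ℕ => ((x, (a i).1 * x + (a i).2 + 1 / ((k : ℝ) + 1)) : ℝ × ℝ))
        Filter.atTop (nhds (x, (a i).1 * x + (a i).2)) :=
      Filter.Tendsto.prodMk_nhds tendsto_const_nhds h1
    refine mem_closure_of_tendsto htend ?_
    filter_upwards with k
    intro j
    have hp : (0 : ℝ) < 1 / ((k : ℝ) + 1) := by positivity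
    have := hx j
    simp only
    linarith
  constructor
  · -- Contributes → condition
    intro hcon i h1 h2
    set i0 : Fin n := ⟨(i : ℕ) - 1, by omega⟩ with hi0
    set i2 : Fin n := ⟨(i : ℕ) + 1, h2⟩ with hi2
    have hm01 : (a i0).1 < (a i).1 := hmono (by rw [Fin.lt_def]; simp [hi0]; omega)
    have hm12 : (a i).1 < (a i2).1 := hmono (by rw [Fin.lt_def]; simp [hi2])
    rw [below_interPt_iff hm01 hm12]
    obtain ⟨p, q, hpq, ⟨hpc, hpl⟩, ⟨hqc, hql⟩⟩ := hcon i
    simp only [lineSet, mem_setOf_eq] at hpl hql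
    have hp0 := hsub i0 hpc
    have hq0 := hsub i0 hqc
    have hp2 := hsub i2 hpc
    have hq2 := hsub i2 hqc
    simp only [mem_setOf_eq] at hp0 hq0 hp2 hq2
    rw [hpl] at hp0 hp2
    rw [hql] at hq0 hq2
    have hx1p : ((a i).2 - (a i0).2) / ((a i0).1 - (a i).1) ≤ p.1 := (xcross_le_iff hm01 p.1).mp hp0
    have hx1q : ((a i).2 - (a i0).2) / ((a i0).1 - (a i).1) ≤ q.1 := (xcross_le_iff hm01 q.1).mp hq0
    have hx2p : p.1 ≤ ((a i2).2 - (a i).2) / ((a i).1 - (a i2).1) := by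
      by_contra h'
      push_neg at h'
      have := (xcross_lt_iff hm12 p.1).mpr h'
      linarith
    have hx2q : q.1 ≤ ((a i2).2 - (a i).2) / ((a i).1 - (a i2).1) := by
      by_contra h'
      push_neg at h'
      have := (xcross_lt_iff hm12 q.1).mpr h'
      linarith
    have hne : p.1 ≠ q.1 := by
      intro hE
      apply hpq
      have : p.2 = q.2 := by rw [hpl, hql, hE]
      exact Prod.ext hE this
    rcases lt_or_gt_of_ne hne with h | h
    · linarith
    · linarith
  · -- condition → Contributes
    intro hcond i
    set A : ℕ → ℝ × ℝ := fun k => if h : k < n then a ⟨k, h⟩ else 0 with hAdef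
    have hAeq : ∀ (k : ℕ) (h : k < n), A k = a ⟨k, h⟩ := fun k h => dif_pos h
    have hmA : ∀ k l : ℕ, k < l → l < n → (A k).1 < (A l).1 := by
      intro k l hkl hln
      rw [hAeq k (by omega), hAeq l hln]
      exact hmono (by rw [Fin.lt_def]; simpa)
    have hcA : ∀ k : ℕ, 0 < k → k + 1 < n →
        ((A k).2 - (A (k - 1)).2) / ((A (k - 1)).1 - (A k).1) <
        ((A (k + 1)).2 - (A k).2) / ((A k).1 - (A (k + 1)).1) := by
      intro k hk hk1
      have h := hcond ⟨k, by omega⟩ (by simpa) (by simpa)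
      rw [below_interPt_iff (hmono (by rw [Fin.lt_def]; simp; omega))
        (hmono (by rw [Fin.lt_def]; simp))] at h
      rw [hAeq (k - 1) (by omega), hAeq k (by omega), hAeq (k + 1) hk1]
      exact h
    -- every line left of i is below line i to the right of the left crossing
    have claimL : ∀ m i j : ℕ, j + m = i → 0 < i → i < n → ∀ x : ℝ,
        ((A i).2 - (A (i - 1)).2) / ((A (i - 1)).1 - (A i).1) ≤ x →
        (A j).1 * x + (A j).2 ≤ (A i).1 * x + (A i).2 := by
      intro m
      induction m with
      | zero =>
        intro i j hji hi hin x hx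
        rw [show j = i from by omega]
      | succ m ih =>
        intro i j hji hi hin x hx
        have hm1 : (A (i - 1)).1 < (A i).1 := hmA (i - 1) i (by omega) hin
        have hstep := (xcross_le_iff hm1 x).mpr hx
        rcases Nat.eq_zero_or_pos m with hm0 | hm0
        · rw [show j = i - 1 from by omega]
          exact hstep
        · have hc := hcA (i - 1) (by omega) (by rw [show i - 1 + 1 = i from by omega]; exact hin)
          rw [show i - 1 + 1 = i from by omega] at hc
          have hr := ih (i - 1) j (by omega) (by omega) (by omega) x
            (le_of_lt (lt_of_lt_of_le hc hx))
          linarith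
    -- every line right of i is below line i to the left of the right crossing
    have claimR : ∀ m i j : ℕ, i + m = j → j < n → i + 1 < n → ∀ x : ℝ,
        x ≤ ((A (i + 1)).2 - (A i).2) / ((A i).1 - (A (i + 1)).1) →
        (A j).1 * x + (A j).2 ≤ (A i).1 * x + (A i).2 := by
      intro m
      induction m with
      | zero =>
        intro i j hij hjn hin x hx
        rw [show j = i from by omega]
      | succ m ih =>
        intro i j hij hjn hin x hx
        have hm1 : (A i).1 < (A (i + 1)).1 := hmA i (i + 1) (by omega) hin
        have hstep : (A (i + 1)).1 * x + (A (i + 1)).2 ≤ (A i).1 * x + (A i).2 := by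
          by_contra h'
          push_neg at h'
          have := (xcross_lt_iff hm1 x).mp h'
          linarith
        rcases Nat.eq_zero_or_pos m with hm0 | hm0
        · rw [show j = i + 1 from by omega]
          exact hstep
        · have hc := hcA (i + 1) (by omega) (by omega)
          rw [show i + 1 - 1 = i from by omega] at hc
          have hr := ih (i + 1) j (by omega) hjn (by omega) x
            (le_of_lt (lt_of_le_of_lt hx hc))
          linarith
    -- now produce the two boundary points for line i
    have hai : A (i : ℕ) = a i := by rw [hAeq (i : ℕ) i.isLt]
    have haj : ∀ j : Fin n, A (j : ℕ) = a j := fun j => by rw [hAeq (j : ℕ) j.isLt]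
    -- main helper: whenever line i is maximal at u and v with u ≠ v, we win
    have key : ∀ u v : ℝ, u ≠ v →
        (∀ j : Fin n, (a j).1 * u + (a j).2 ≤ (a i).1 * u + (a i).2) →
        (∀ j : Fin n, (a j).1 * v + (a j).2 ≤ (a i).1 * v + (a i).2) →
        Contributes (a i) U := by
      intro u v huv hu hv
      refine ⟨(u, (a i).1 * u + (a i).2), (v, (a i).1 * v + (a i).2), ?_, ⟨hclos i u hu, rfl⟩,
        ⟨hclos i v hv, rfl⟩⟩
      intro hE
      exact huv (congrArg Prod.fst hE)
    set k : ℕ := (i : ℕ) with hk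
    rcases Nat.eq_zero_or_pos k with hk0 | hkpos
    · -- i = 0 : line i maximal on (-∞, t₀]
      have hk1 : k + 1 < n := by omega
      set v : ℝ := ((A (k + 1)).2 - (A k).2) / ((A k).1 - (A (k + 1)).1) with hv
      have hmax : ∀ x : ℝ, x ≤ v → ∀ j : Fin n, (a j).1 * x + (a j).2 ≤ (a i).1 * x + (a i).2 := by
        intro x hx j
        rw [← hai, ← haj j]
        rcases Nat.lt_or_ge k (j : ℕ) with hj | hj
        · exact claimR ((j : ℕ) - k) k (j : ℕ) (by omega) j.isLt hk1 x hx
        · rw [show (j : ℕ) = k from by omega]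
      exact key (v - 1) v (by norm_num) (hmax (v - 1) (by linarith)) (hmax v le_rfl)
    · rcases Nat.lt_or_ge (k + 1) n with hk1 | hk1
      · -- interior: maximal on [t_{k-1}, t_k]
        set u : ℝ := ((A k).2 - (A (k - 1)).2) / ((A (k - 1)).1 - (A k).1) with hu
        set v : ℝ := ((A (k + 1)).2 - (A k).2) / ((A k).1 - (A (k + 1)).1) with hv
        have huv : u < v := hcA k hkpos hk1
        have hmax : ∀ x : ℝ, u ≤ x → x ≤ v →
            ∀ j : Fin n, (a j).1 * x + (a j).2 ≤ (a i).1 * x + (a i).2 := by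
          intro x hx1 hx2 j
          rw [← hai, ← haj j]
          rcases lt_trichotomy (j : ℕ) k with hj | hj | hj
          · exact claimL (k - (j : ℕ)) k (j : ℕ) (by omega) hkpos (by omega) x hx1
          · rw [hj]
          · exact claimR ((j : ℕ) - k) k (j : ℕ) (by omega) j.isLt hk1 x hx2
        exact key u v (ne_of_lt huv) (hmax u le_rfl (le_of_lt huv)) (hmax v (le_of_lt huv) le_rfl)
      · -- i = n - 1 : maximal on [t_{k-1}, ∞)
        set u : ℝ := ((A k).2 - (A (k - 1)).2) / ((A (k - 1)).1 - (A k).1) with hu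
        have hmax : ∀ x : ℝ, u ≤ x →
            ∀ j : Fin n, (a j).1 * x + (a j).2 ≤ (a i).1 * x + (a i).2 := by
          intro x hx j
          rw [← hai, ← haj j]
          rcases Nat.lt_or_ge (j : ℕ) k with hj | hj
          · exact claimL (k - (j : ℕ)) k (j : ℕ) (by omega) hkpos (by omega) x hx
          · rw [show (j : ℕ) = k from by omega]
        exact key u (u + 1) (by norm_num) (hmax u le_rfl) (hmax (u + 1) (by linarith))
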